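/- arXiv:gr-qc/9603033 — 4 statements merged into one kernel-verified Lean document; each statement's English description precedes it below -/
import Mathlib

section
/- If a : [0,∞) → ℝ is positive, twice differentiable, satisfies a'' + (4π/3)a^{-2} = 0, a(0) = 1, a'(0) > 0, and the energy E := (1/2)a'(0)² - 4π/3 is positive, then there exist constants 0 < c₁ < c₂ such that c₁ ≤ a'(t) ≤ c₂ for all t ≥ 0. -/
open Real Set

/-- If `a` is positive, twice differentiable on `[0,∞)`, satisfies
`a'' + (4π/3) a⁻² = 0`, `a 0 = 1`, `a' 0 > 0`, and the energy
`E = (1/2) a'(0)² - 4π/3` is positive, then `a'` is bounded between two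
positive constants. -/
theorem stmt0 (a : ℝ → ℝ)
    (hpos : ∀ t ≥ 0, 0 < a t)
    (hd1 : ∀ t ≥ 0, DifferentiableAt ℝ a t)
    (hd2 : ∀ t ≥ 0, DifferentiableAt ℝ (deriv a) t)
    (hode : ∀ t ≥ 0, deriv (deriv a) t + (4 * Real.pi / 3) * ((a t) ^ 2)⁻¹ = 0)
    (ha0 : a 0 = 1)
    (ha0' : 0 < deriv a 0)
    (hE : 0 < (1 / 2) * (deriv a 0) ^ 2 - 4 * Real.pi / 3) :
    ∃ c₁ c₂ : ℝ, 0 < c₁ ∧ c₁ < c₂ ∧ ∀ t ≥ 0, c₁ ≤ deriv a t ∧ deriv a t ≤ c₂ := by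
  have hπ : (0:ℝ) < Real.pi := Real.pi_pos
  obtain ⟨E, hEdef⟩ : ∃ E : ℝ, E = (1 / 2) * (deriv a 0) ^ 2 - 4 * Real.pi / 3 := ⟨_, rfl⟩
  rw [← hEdef] at hE
  set F : ℝ → ℝ := fun t => (1/2) * (deriv a t)^2 - (4 * Real.pi / 3) * (a t)⁻¹ with hFdef
  -- F has derivative 0 everywhere on [0, ∞)
  have hF' : ∀ t ≥ 0, HasDerivAt F 0 t := by
    intro t ht
    have hg : HasDerivAt (deriv a) (deriv (deriv a) t) t := (hd2 t ht).hasDerivAt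
    have ha : HasDerivAt a (deriv a t) t := (hd1 t ht).hasDerivAt
    have hat : a t ≠ 0 := ne_of_gt (hpos t ht)
    have h1 : HasDerivAt (fun t => (1/2) * (deriv a t)^2)
        ((1/2) * (2 * deriv a t ^ 1 * deriv (deriv a) t)) t := (hg.pow 2).const_mul (1/2)
    have h2 : HasDerivAt (fun t => (4 * Real.pi / 3) * (a t)⁻¹)
        ((4 * Real.pi / 3) * (-deriv a t / (a t)^2)) t := (ha.inv hat).const_mul _
    have : HasDerivAt F ((1/2) * (2 * deriv a t ^ 1 * deriv (deriv a) t) -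
        (4 * Real.pi / 3) * (-deriv a t / (a t)^2)) t := h1.sub h2
    convert this using 1
    have hode' := hode t ht
    have : deriv (deriv a) t = -(4 * Real.pi / 3) * ((a t) ^ 2)⁻¹ := by linarith
    rw [this]
    field_simp
    ring
  -- F is constant on [0, ∞)
  have hFconst : ∀ t ≥ 0, F t = F 0 := by
    intro t ht
    have hcont : ContinuousOn F (Icc 0 t) := fun x hx =>
      ((hF' x hx.1).continuousAt).continuousWithinAt
    have hderiv : ∀ x ∈ Ico (0:ℝ) t, HasDerivWithinAt F 0 (Ici x) x := fun x hx =>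
      (hF' x hx.1).hasDerivWithinAt
    exact constant_of_has_deriv_right_zero hcont hderiv t ⟨ht, le_refl t⟩
  have hF0 : F 0 = E := by
    simp only [hFdef, hEdef, ha0]
    norm_num
  -- energy inequality: (deriv a t)^2 > 2 E for all t ≥ 0
  have hsq : ∀ t ≥ 0, 2 * E < (deriv a t)^2 := by
    intro t ht
    have h := hFconst t ht
    rw [hF0] at h
    simp only [hFdef] at h
    have hat : 0 < (a t)⁻¹ := inv_pos.mpr (hpos t ht)
    have hX : 0 < (4 * Real.pi / 3) * (a t)⁻¹ := by positivity
    have h2 : deriv a t ^ 2 = 2 * E + 2 * ((4 * Real.pi / 3) * (a t)⁻¹) := by linarith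
    linarith
  have hEpos : 0 < E := hE
  -- deriv a stays positive
  have hgpos : ∀ t ≥ 0, 0 < deriv a t := by
    intro t ht
    by_contra hneg
    push_neg at hneg
    have hgt : deriv a t < 0 := lt_of_le_of_ne hneg (by
      intro h0
      have := hsq t ht
      rw [h0] at this
      nlinarith)
    have hcont : ContinuousOn (deriv a) (Icc 0 t) := fun x hx =>
      ((hd2 x hx.1).continuousAt).continuousWithinAt
    have : (0:ℝ) ∈ Icc (deriv a t) (deriv a 0) := ⟨le_of_lt hgt, le_of_lt ha0'⟩
    obtain ⟨c, hc, hc0⟩ := intermediate_value_Icc' ht hcont this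
    have := hsq c hc.1
    rw [hc0] at this
    nlinarith
  -- lower bound
  have hlow : ∀ t ≥ 0, Real.sqrt (2 * E) ≤ deriv a t := by
    intro t ht
    have h1 : Real.sqrt (2 * E) ≤ Real.sqrt ((deriv a t)^2) :=
      Real.sqrt_le_sqrt (le_of_lt (hsq t ht))
    rwa [Real.sqrt_sq (le_of_lt (hgpos t ht))] at h1
  -- a' is antitone on [0,∞), giving upper bound
  have hanti : AntitoneOn (deriv a) (Ici 0) := by
    apply antitoneOn_of_deriv_nonpos (convex_Ici 0)
    · exact fun x hx => ((hd2 x hx).continuousAt).continuousWithinAt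
    · intro x hx
      rw [interior_Ici] at hx
      exact ((hd2 x (le_of_lt hx)).differentiableWithinAt)
    · intro x hx
      rw [interior_Ici] at hx
      have hode' := hode x (le_of_lt hx)
      have hax : 0 < a x := hpos x (le_of_lt hx)
      have : 0 < ((a x)^2)⁻¹ := by positivity
      nlinarith
  refine ⟨Real.sqrt (2 * E), deriv a 0, ?_, ?_, ?_⟩
  · exact Real.sqrt_pos.mpr (by linarith)
  · have h1 : Real.sqrt (2 * E) < Real.sqrt ((deriv a 0)^2) := by
      apply Real.sqrt_lt_sqrt (by linarith)
      simp only [hEdef]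
      nlinarith
    rwa [Real.sqrt_sq (le_of_lt ha0')] at h1
  · intro t ht
    exact ⟨hlow t ht, hanti (le_refl (0:ℝ)) ht ht⟩
end

section
/- Let H : ℝ → ℝ be C¹ with compact support and ∫_{ℝ³} H(|v|²) dv = 1, and let a : [0,∞) → ℝ be a positive C² solution of a'' + (4π/3)a^{-2} = 0. Then the function f₀(t,x,v) := H(a(t)² |v - (a'(t)/a(t)) x|²) satisfies the Vlasov equation ∂_t f₀ + v·∂_x f₀ - ∂_x U₀ · ∂_v f₀ = 0, where U₀(t,x) = (2π/3) a(t)^{-3} |x|². -/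
open Real Set MeasureTheory

noncomputable section

local notation "E3" => EuclideanSpace ℝ (Fin 3)

-- gradient in x of y ↦ H (A * ⟪v - c•y, v - c•y⟫)
lemma gradx_aux (H : ℝ → ℝ) (hH : ContDiff ℝ 1 H) (A c : ℝ) (v x : E3) :
    HasGradientAt (fun y : E3 => H (A * (inner ℝ (v - c • y) (v - c • y) : ℝ)))
      ((deriv H (A * (inner ℝ (v - c • x) (v - c • x) : ℝ)) * (A * (-(2*c)))) • (v - c • x)) x := by
  have hlin : HasFDerivAt (fun y : E3 => v - c • y)
      ((0 : E3 →L[ℝ] E3) - c • ContinuousLinearMap.id ℝ E3) x :=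
    (hasFDerivAt_const v x).sub ((hasFDerivAt_id x).const_smul c)
  have hinn := hlin.inner ℝ hlin
  have hq := hinn.const_mul A
  have hH' : HasDerivAt H (deriv H (A * (inner ℝ (v - c • x) (v - c • x) : ℝ)))
      (A * (inner ℝ (v - c • x) (v - c • x) : ℝ)) :=
    ((hH.differentiable one_ne_zero) _).hasDerivAt
  have hcomp := hH'.comp_hasFDerivAt x hq
  rw [hasGradientAt_iff_hasFDerivAt]
  refine hcomp.congr_fderiv ?_
  apply ContinuousLinearMap.ext
  intro dy
  simp only [InnerProductSpace.toDual_apply_apply, ContinuousLinearMap.smul_apply,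
    ContinuousLinearMap.comp_apply, ContinuousLinearMap.prod_apply, fderivInnerCLM_apply,
    ContinuousLinearMap.sub_apply, ContinuousLinearMap.zero_apply, ContinuousLinearMap.id_apply,
    real_inner_smul_left, real_inner_smul_right, inner_sub_left, inner_sub_right, inner_zero_left,
    inner_zero_right, smul_eq_mul, zero_sub, inner_neg_left, inner_neg_right,
    ContinuousLinearMap.neg_apply]
  rw [real_inner_comm dy v, real_inner_comm dy x]
  ring

-- gradient in v of w ↦ H (A * ⟪w - u, w - u⟫)
lemma gradv_aux (H : ℝ → ℝ) (hH : ContDiff ℝ 1 H) (A : ℝ) (u v : E3) :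
    HasGradientAt (fun w : E3 => H (A * (inner ℝ (w - u) (w - u) : ℝ)))
      ((deriv H (A * (inner ℝ (v - u) (v - u) : ℝ)) * (A * 2)) • (v - u)) v := by
  have hlin : HasFDerivAt (fun w : E3 => w - u)
      (ContinuousLinearMap.id ℝ E3 - (0 : E3 →L[ℝ] E3)) v :=
    (hasFDerivAt_id v).sub (hasFDerivAt_const u v)
  have hinn := hlin.inner ℝ hlin
  have hq := hinn.const_mul A
  have hH' : HasDerivAt H (deriv H (A * (inner ℝ (v - u) (v - u) : ℝ)))
      (A * (inner ℝ (v - u) (v - u) : ℝ)) :=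
    ((hH.differentiable one_ne_zero) _).hasDerivAt
  have hcomp := hH'.comp_hasFDerivAt v hq
  rw [hasGradientAt_iff_hasFDerivAt]
  refine hcomp.congr_fderiv ?_
  apply ContinuousLinearMap.ext
  intro dy
  simp only [InnerProductSpace.toDual_apply_apply, ContinuousLinearMap.smul_apply,
    ContinuousLinearMap.comp_apply, ContinuousLinearMap.prod_apply, fderivInnerCLM_apply,
    ContinuousLinearMap.sub_apply, ContinuousLinearMap.zero_apply, ContinuousLinearMap.id_apply,
    real_inner_smul_left, real_inner_smul_right, inner_sub_left, inner_sub_right,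
    smul_eq_mul, sub_zero]
  rw [real_inner_comm dy v, real_inner_comm dy u]
  ring
/-- The homogeneous distribution `f₀(t,x,v) = H(a(t)² |v - (a'(t)/a(t)) x|²)`
satisfies the Vlasov equation `∂_t f₀ + v·∂_x f₀ - ∂_x U₀ · ∂_v f₀ = 0`, where
`U₀(t,x) = (2π/3) a(t)⁻³ |x|²`, i.e. `∂_x U₀(t,x) = (4π/3) a(t)⁻³ x`. -/
theorem stmt3 (H : ℝ → ℝ) (hH : ContDiff ℝ 1 H) (hsupp : HasCompactSupport H)
    (hnorm : ∫ v : E3, H (‖v‖ ^ 2) = 1)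
    (a : ℝ → ℝ) (hpos : ∀ t ≥ 0, 0 < a t)
    (haC2 : ContDiff ℝ 2 a)
    (hode : ∀ t ≥ 0, deriv (deriv a) t + (4 * Real.pi / 3) * ((a t) ^ 2)⁻¹ = 0)
    (f₀ : ℝ → E3 → E3 → ℝ)
    (hf₀ : ∀ t x v, f₀ t x v = H ((a t) ^ 2 * ‖v - (deriv a t / a t) • x‖ ^ 2)) :
    ∀ t ≥ 0, ∀ x v : E3,
      deriv (fun s => f₀ s x v) t
        + (inner ℝ v (gradient (fun y => f₀ t y v) x) : ℝ)
        - (inner ℝ ((4 * Real.pi / 3 * ((a t) ^ 3)⁻¹) • x)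
            (gradient (fun w => f₀ t x w) v) : ℝ) = 0 := by
  intro t ht x v
  have hat : a t ≠ 0 := (hpos t ht).ne'
  set a' := deriv a t with ha'def
  set a'' := deriv (deriv a) t with ha''def
  set c : ℝ := a' / a t with hcdef
  set w : E3 := v - c • x with hwdef
  set q : ℝ := a t ^ 2 * (inner ℝ w w : ℝ) with hqdef
  -- time derivative
  have hda : HasDerivAt a a' t := ((haC2.differentiable two_ne_zero) t).hasDerivAt
  have hC1 : ContDiff ℝ 1 (deriv a) := by
    have h2 : ContDiff ℝ ((1 : ℕ) + 1) a := by exact_mod_cast haC2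
    exact (contDiff_succ_iff_deriv.mp h2).2.2
  have hda' : HasDerivAt (deriv a) a'' t := ((hC1.differentiable one_ne_zero) t).hasDerivAt
  have hc : HasDerivAt (fun s => deriv a s / a s) ((a'' * a t - a' * a') / a t ^ 2) t :=
    hda'.div hda hat
  have hw : HasDerivAt (fun s => v - (deriv a s / a s) • x)
      ((0 : E3) - ((a'' * a t - a' * a') / a t ^ 2) • x) t :=
    (hasDerivAt_const t v).sub (hc.smul_const x)
  have hw0 : v - (deriv a t / a t) • x = w := rfl
  have hr : HasDerivAt (fun s => (inner ℝ (v - (deriv a s / a s) • x) (v - (deriv a s / a s) • x) : ℝ))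
      ((inner ℝ w ((0 : E3) - ((a'' * a t - a' * a') / a t ^ 2) • x) : ℝ)
        + (inner ℝ ((0 : E3) - ((a'' * a t - a' * a') / a t ^ 2) • x) w : ℝ)) t := by
    have := hw.inner ℝ hw
    rwa [hw0] at this
  have hA : HasDerivAt (fun s => a s ^ 2) (2 * a t * a') t := by
    simpa using hda.fun_pow 2
  have hq : HasDerivAt (fun s => a s ^ 2 * (inner ℝ (v - (deriv a s / a s) • x) (v - (deriv a s / a s) • x) : ℝ))
      (2 * a t * a' * (inner ℝ w w : ℝ) + a t ^ 2 *
        ((inner ℝ w ((0 : E3) - ((a'' * a t - a' * a') / a t ^ 2) • x) : ℝ)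
          + (inner ℝ ((0 : E3) - ((a'' * a t - a' * a') / a t ^ 2) • x) w : ℝ))) t :=
    hA.mul hr
  have hHq : HasDerivAt H (deriv H q) q := ((hH.differentiable one_ne_zero) q).hasDerivAt
  have htime : HasDerivAt (fun s => f₀ s x v)
      (deriv H q * (2 * a t * a' * (inner ℝ w w : ℝ) + a t ^ 2 *
        ((inner ℝ w ((0 : E3) - ((a'' * a t - a' * a') / a t ^ 2) • x) : ℝ)
          + (inner ℝ ((0 : E3) - ((a'' * a t - a' * a') / a t ^ 2) • x) w : ℝ)))) t := by
    have := hHq.comp t hq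
    refine this.congr_of_eventuallyEq (Filter.Eventually.of_forall fun s => ?_)
    simp only [Function.comp, hf₀, real_inner_self_eq_norm_sq]
  -- gradient in x
  have hfx : (fun y : E3 => f₀ t y v)
      = fun y : E3 => H (a t ^ 2 * (inner ℝ (v - c • y) (v - c • y) : ℝ)) := by
    funext y
    rw [hf₀, ← real_inner_self_eq_norm_sq, ← ha'def, ← hcdef]
  have hgx : HasGradientAt (fun y : E3 => f₀ t y v)
      ((deriv H q * (a t ^ 2 * (-(2 * c)))) • w) x := by
    rw [hfx, hqdef, hwdef]
    exact gradx_aux H hH (a t ^ 2) c v x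
  -- gradient in v
  have hfv : (fun u : E3 => f₀ t x u)
      = fun u : E3 => H (a t ^ 2 * (inner ℝ (u - c • x) (u - c • x) : ℝ)) := by
    funext u
    rw [hf₀, ← real_inner_self_eq_norm_sq, ← ha'def, ← hcdef]
  have hgv : HasGradientAt (fun u : E3 => f₀ t x u)
      ((deriv H q * (a t ^ 2 * 2)) • w) v := by
    rw [hfv, hqdef, hwdef]
    exact gradv_aux H hH (a t ^ 2) (c • x) v
  rw [htime.deriv, hgx.gradient, hgv.gradient]
  -- algebra
  have hvw : (inner ℝ v w : ℝ) = (inner ℝ w w : ℝ) + c * (inner ℝ x w : ℝ) := by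
    have : v = w + c • x := by rw [hwdef]; abel
    rw [this, inner_add_left, real_inner_smul_left]
  have hode' : a'' = -(4 * Real.pi / 3) * ((a t) ^ 2)⁻¹ := by
    have := hode t ht
    linarith
  simp only [zero_sub, inner_neg_left, inner_neg_right, real_inner_smul_left,
    real_inner_smul_right]
  have hwx : (inner ℝ w x : ℝ) = inner ℝ x w := real_inner_comm _ _
  rw [hwx, hvw, hode']
  set h' : ℝ := deriv H q with hh'
  set r : ℝ := (inner ℝ w w : ℝ) with hrr
  set p : ℝ := (inner ℝ x w : ℝ) with hpp
  clear_value h' r p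
  clear hwx hvw hrr hpp hh' htime hq hr hHq hgx hgv hfx hfv hda hda' hc hw hw0 hA hC1 hqdef hwdef
  clear_value w q
  clear hode hf₀ hnorm hsupp
  rw [hcdef]
  clear_value c a' a''
  field_simp
  ring

end
end

section
/- Suppose |∂_x X(s,t,x,v)| ≤ C (a(t)/a(s)) for 0 ≤ s ≤ t ≤ T and ‖∂²_x W(τ)‖_∞ ≤ γ a(τ)^{-δ} with γ ∈ (0,1], δ > 0, and a(τ) ≥ 1 + c₁τ, c₁ > 0. If |∂_x V(s,t,x,v)| ≤ a(s)^{-1} ∫_s^t ‖∂²_x W(τ)‖_∞ |∂_x X(τ,t,x,v)| dτ, then |∂_x V(s,t,x,v)| ≤ C' γ a(t)/a(s) for a constant C' depending only on C, c₁, δ. -/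
open Real Set MeasureTheory

/-- Derivative estimate for the velocity characteristics under the free streaming
condition: if `|∂_x X(s)| ≤ C a(t)/a(s)` (here `p`), `‖∂²_x W(τ)‖ ≤ γ a(τ)^(-δ)`
(here `w`), and `|∂_x V(s)| ≤ a(s)⁻¹ ∫_s^t w(τ) p(τ) dτ` (here `q`), then
`q s ≤ C' γ a(t)/a(s)` with `C'` depending only on `C, c₁, δ`. -/
theorem stmt9 (C c₁ δ : ℝ) (hC : 0 < C) (hc₁ : 0 < c₁) (hδ : 0 < δ) :
    ∃ C' : ℝ, 0 < C' ∧
      ∀ (a w : ℝ → ℝ) (γ T : ℝ), 0 < γ → γ ≤ 1 →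
        Continuous a → (∀ τ ≥ 0, 1 + c₁ * τ ≤ a τ) →
        ContinuousOn w (Icc 0 T) →
        (∀ τ ∈ Icc 0 T, 0 ≤ w τ ∧ w τ ≤ γ * (a τ) ^ (-δ)) →
        ∀ t ∈ Icc 0 T, ∀ p q : ℝ → ℝ,
          ContinuousOn p (Icc 0 t) →
          (∀ s ∈ Icc 0 t, 0 ≤ p s ∧ p s ≤ C * a t / a s) →
          (∀ s ∈ Icc 0 t, q s ≤ (a s)⁻¹ * ∫ τ in s..t, w τ * p τ) →
          ∀ s ∈ Icc 0 t, q s ≤ C' * γ * a t / a s := by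
  refine ⟨C / (c₁ * δ), div_pos hC (mul_pos hc₁ hδ), ?_⟩
  intro a w γ T hγ hγ1 ha hage hw hwb t ht p q hp hpb hqb s hs
  obtain ⟨hs0, hst⟩ := hs
  obtain ⟨ht0, htT⟩ := ht
  -- positivity facts
  have hapos : ∀ τ : ℝ, 0 ≤ τ → 0 < a τ := fun τ hτ =>
    lt_of_lt_of_le (by nlinarith) (hage τ hτ)
  have has : 0 < a s := hapos s hs0
  have hat : 0 < a t := hapos t (le_trans hs0 hst)
  -- pointwise bound : w τ * p τ ≤ γ * C * a t * (1 + c₁ * τ) ^ (-(1+δ))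
  have key : ∀ τ ∈ Icc s t,
      w τ * p τ ≤ γ * C * a t * (1 + c₁ * τ) ^ (-(1 + δ)) := by
    intro τ hτ
    obtain ⟨hτ1, hτ2⟩ := hτ
    have hτ0 : 0 ≤ τ := le_trans hs0 hτ1
    have hbase : (1 : ℝ) ≤ 1 + c₁ * τ := by nlinarith
    have hbpos : (0 : ℝ) < 1 + c₁ * τ := by linarith
    have haτ : 0 < a τ := hapos τ hτ0
    have haτge : 1 + c₁ * τ ≤ a τ := hage τ hτ0
    obtain ⟨hw0, hwle⟩ := hwb τ ⟨hτ0, le_trans hτ2 htT⟩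
    obtain ⟨hp0, hple⟩ := hpb τ ⟨hτ0, hτ2⟩
    have h1 : (a τ) ^ (-δ) ≤ (1 + c₁ * τ) ^ (-δ) := by
      rw [Real.rpow_neg (le_of_lt haτ), Real.rpow_neg (le_of_lt hbpos)]
      exact inv_anti₀ (Real.rpow_pos_of_pos hbpos δ)
        (Real.rpow_le_rpow (le_of_lt hbpos) haτge (le_of_lt hδ))
    have h2 : C * a t / a τ ≤ C * a t / (1 + c₁ * τ) :=
      div_le_div_of_nonneg_left (by positivity) hbpos haτge
    calc w τ * p τ ≤ (γ * (1 + c₁ * τ) ^ (-δ)) * (C * a t / (1 + c₁ * τ)) := by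
          apply mul_le_mul _ (le_trans hple h2) hp0 (by positivity)
          exact le_trans hwle (by nlinarith [Real.rpow_nonneg (le_of_lt hbpos) δ])
      _ = γ * C * a t * (1 + c₁ * τ) ^ (-(1 + δ)) := by
          rw [show -(1 + δ) = (-δ) + (-1) by ring, Real.rpow_add hbpos,
            Real.rpow_neg_one]
          field_simp
  -- integrability
  have hIccsub : Icc s t ⊆ Icc 0 t := Icc_subset_Icc hs0 le_rfl
  have hIccsubT : Icc s t ⊆ Icc 0 T := Icc_subset_Icc hs0 htT
  have hwp_int : IntervalIntegrable (fun τ => w τ * p τ) volume s t := by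
    apply ContinuousOn.intervalIntegrable
    rw [uIcc_of_le hst]
    exact ((hw.mono hIccsubT).mul (hp.mono hIccsub))
  have hg_cont : ContinuousOn (fun τ : ℝ => γ * C * a t * (1 + c₁ * τ) ^ (-(1 + δ)))
      (Icc s t) := by
    apply ContinuousOn.mul continuousOn_const
    apply ContinuousOn.rpow_const
    · exact (continuous_const.add (continuous_const.mul continuous_id)).continuousOn
    · intro x hx
      left
      have : 0 ≤ x := le_trans hs0 hx.1
      nlinarith
  have hg_int : IntervalIntegrable
      (fun τ : ℝ => γ * C * a t * (1 + c₁ * τ) ^ (-(1 + δ))) volume s t := by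
    apply ContinuousOn.intervalIntegrable
    rwa [uIcc_of_le hst]
  -- compare integrals
  have hint1 : (∫ τ in s..t, w τ * p τ) ≤
      ∫ τ in s..t, γ * C * a t * (1 + c₁ * τ) ^ (-(1 + δ)) :=
    intervalIntegral.integral_mono_on hst hwp_int hg_int key
  -- compute the explicit integral bound
  have hFderiv : ∀ τ ∈ Icc s t,
      HasDerivAt (fun x : ℝ => -(1 + c₁ * x) ^ (-δ) / (c₁ * δ))
        ((1 + c₁ * τ) ^ (-(1 + δ))) τ := by
    intro τ hτ
    have hτ0 : 0 ≤ τ := le_trans hs0 hτ.1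
    have hbpos : (0 : ℝ) < 1 + c₁ * τ := by nlinarith
    have h1 : HasDerivAt (fun x : ℝ => 1 + c₁ * x) c₁ τ := by
      simpa using (hasDerivAt_id τ).const_mul c₁ |>.const_add 1
    have h2 : HasDerivAt (fun x : ℝ => (1 + c₁ * x) ^ (-δ))
        (c₁ * (-δ) * (1 + c₁ * τ) ^ (-δ - 1)) τ := by
      have := h1.rpow_const (p := -δ) (Or.inl (ne_of_gt hbpos))
      simpa [mul_comm, mul_assoc, mul_left_comm] using this
    have h3 := (h2.neg).div_const (c₁ * δ)
    refine h3.congr_deriv ?_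
    have : -δ - 1 = -(1 + δ) := by ring
    rw [this]
    field_simp
  have hint2 : (∫ τ in s..t, (1 + c₁ * τ) ^ (-(1 + δ))) =
      -(1 + c₁ * t) ^ (-δ) / (c₁ * δ) - -(1 + c₁ * s) ^ (-δ) / (c₁ * δ) := by
    apply intervalIntegral.integral_eq_sub_of_hasDerivAt
    · intro τ hτ
      exact hFderiv τ (by rwa [uIcc_of_le hst] at hτ)
    · apply ContinuousOn.intervalIntegrable
      rw [uIcc_of_le hst]
      have := hg_cont
      intro x hx
      have hx' := hg_cont x hx
      -- reuse continuity: divide out constants? simpler: redo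
      exact (hg_cont.div_const (γ * C * a t)).congr (fun x hx => by
        have : γ * C * a t ≠ 0 := by positivity
        field_simp) x hx
  have hbound : (∫ τ in s..t, (1 + c₁ * τ) ^ (-(1 + δ))) ≤ 1 / (c₁ * δ) := by
    rw [hint2]
    have h1 : (1 + c₁ * s) ^ (-δ) ≤ 1 :=
      Real.rpow_le_one_of_one_le_of_nonpos (by nlinarith) (by linarith)
    have h2 : (0:ℝ) ≤ (1 + c₁ * t) ^ (-δ) :=
      Real.rpow_nonneg (by nlinarith [le_trans hs0 hst]) _
    have hcd : (0:ℝ) < c₁ * δ := mul_pos hc₁ hδ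
    rw [div_sub_div_same, div_le_div_iff₀ hcd hcd]
    nlinarith
  -- assemble
  have hq := hqb s ⟨hs0, hst⟩
  have hconst : (∫ τ in s..t, γ * C * a t * (1 + c₁ * τ) ^ (-(1 + δ))) =
      γ * C * a t * ∫ τ in s..t, (1 + c₁ * τ) ^ (-(1 + δ)) :=
    intervalIntegral.integral_const_mul _ _
  have hfinal : (∫ τ in s..t, w τ * p τ) ≤ γ * C * a t * (1 / (c₁ * δ)) := by
    calc (∫ τ in s..t, w τ * p τ) ≤ γ * C * a t * ∫ τ in s..t, (1 + c₁ * τ) ^ (-(1 + δ)) := by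
          rw [← hconst]; exact hint1
      _ ≤ γ * C * a t * (1 / (c₁ * δ)) := by
          apply mul_le_mul_of_nonneg_left hbound (by positivity)
  calc q s ≤ (a s)⁻¹ * ∫ τ in s..t, w τ * p τ := hq
    _ ≤ (a s)⁻¹ * (γ * C * a t * (1 / (c₁ * δ))) := by
        apply mul_le_mul_of_nonneg_left hfinal (by positivity)
    _ = C / (c₁ * δ) * γ * a t / a s := by
        field_simp
end

section
/- Define ln*(s) = s for s ≤ 1 and ln*(s) = 1 + ln s for s > 1. If u : [0,T] → [0,∞) is continuous and satisfies u(t) ≤ C(t) + C(t) ln*(C(t) exp(∫₀^t u(τ) dτ)) with C continuous, nondecreasing, C(t) ≥ 1, then u(t) ≤ D(t) for a continuous function D depending only on C (in particular, u is bounded on [0,T] independently of the particular solution). -/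
open Real Set MeasureTheory

noncomputable section

/-- `ln*(s) = s` for `s ≤ 1` and `ln*(s) = 1 + ln s` for `s > 1`. -/
def lnStar (s : ℝ) : ℝ := if s ≤ 1 then s else 1 + Real.log s

/-- `ln*(s) ≤ 1 + log s` whenever `1 ≤ s`. -/
lemma lnStar_le_one_add_log {s : ℝ} (hs : 1 ≤ s) : lnStar s ≤ 1 + Real.log s := by
  unfold lnStar
  split_ifs with h
  · have : s = 1 := le_antisymm h hs
    simp [this]
  · exact le_refl _

/-- Log-Gronwall: if a continuous nonnegative `u` on `[0,T]` satisfies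
`u t ≤ C t + C t · ln*(C t · exp(∫₀^t u))` with `C` continuous, nondecreasing
and `≥ 1`, then `u` is bounded by a continuous function `D` depending only
on `C` (and `T`), not on the particular `u`. -/
theorem stmt15 (T : ℝ) (hT : 0 ≤ T) (C : ℝ → ℝ)
    (hCc : ContinuousOn C (Icc 0 T)) (hCmono : MonotoneOn C (Icc 0 T))
    (hC1 : ∀ t ∈ Icc 0 T, 1 ≤ C t) :
    ∃ D : ℝ → ℝ, ContinuousOn D (Icc 0 T) ∧
      ∀ u : ℝ → ℝ, ContinuousOn u (Icc 0 T) → (∀ t ∈ Icc 0 T, 0 ≤ u t) →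
        (∀ t ∈ Icc 0 T,
          u t ≤ C t + C t * lnStar (C t * Real.exp (∫ τ in (0 : ℝ)..t, u τ))) →
        ∀ t ∈ Icc 0 T, u t ≤ D t := by
  -- The bound: D t = C t * (2 + log (C t)) * exp (C t * t)
  refine ⟨fun t => C t * (2 + Real.log (C t)) * Real.exp (C t * t), ?_, ?_⟩
  · -- continuity of D
    have hCne : ∀ t ∈ Icc (0:ℝ) T, C t ≠ 0 := fun t ht =>
      ne_of_gt (lt_of_lt_of_le one_pos (hC1 t ht))
    exact (hCc.mul (continuousOn_const.add (hCc.log hCne))).mul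
      ((hCc.mul continuousOn_id).rexp)
  intro u hu hu0 hineq t₀ ht₀
  -- extend u to a continuous function v on all of ℝ by clamping
  set c : ℝ → ℝ := fun x => max 0 (min T x) with hc
  have hc_cont : Continuous c := continuous_const.max (continuous_const.min continuous_id)
  have hc_mem : ∀ x, c x ∈ Icc (0:ℝ) T := fun x =>
    ⟨le_max_left _ _, max_le hT (min_le_left _ _)⟩
  set v : ℝ → ℝ := fun x => u (c x) with hv_def
  have hv : Continuous v := hu.comp_continuous hc_cont hc_mem
  have hv_eq : ∀ x ∈ Icc (0:ℝ) T, v x = u x := by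
    intro x hx
    have : c x = x := by
      simp only [hc]
      rw [min_eq_right hx.2, max_eq_right hx.1]
    simp [hv_def, this]
  have hv0 : ∀ x, 0 ≤ v x := fun x => hu0 _ (hc_mem x)
  -- values at t₀
  have ht₀T : t₀ ∈ Icc (0:ℝ) T := ht₀
  set A : ℝ := C t₀ * (2 + Real.log (C t₀)) with hA
  set b : ℝ := C t₀ with hb
  have hb1 : 1 ≤ b := hC1 t₀ ht₀T
  have hb0 : 0 < b := lt_of_lt_of_le one_pos hb1
  have hA0 : 0 ≤ A := by
    apply mul_nonneg hb0.le
    have := Real.log_nonneg hb1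
    linarith
  -- the primitive of v
  set f : ℝ → ℝ := fun x => ∫ τ in (0:ℝ)..x, v τ with hf_def
  have hint : ∀ a b : ℝ, IntervalIntegrable v volume a b := fun a b =>
    hv.intervalIntegrable a b
  have hf_cont : Continuous f := intervalIntegral.continuous_primitive hint 0
  have hf_nonneg : ∀ x, 0 ≤ x → 0 ≤ f x := fun x hx =>
    intervalIntegral.integral_nonneg hx (fun τ _ => hv0 τ)
  -- integrals of v and u agree on [0,T]
  have hint_eq : ∀ t ∈ Icc (0:ℝ) T, f t = ∫ τ in (0:ℝ)..t, u τ := by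
    intro t ht
    apply intervalIntegral.integral_congr
    intro x hx
    apply hv_eq
    rw [uIcc_of_le ht.1] at hx
    exact ⟨hx.1, le_trans hx.2 ht.2⟩
  -- key pointwise estimate on [0, t₀]
  have key : ∀ t ∈ Icc (0:ℝ) t₀, v t ≤ A + b * f t := by
    intro t ht
    have htT : t ∈ Icc (0:ℝ) T := ⟨ht.1, le_trans ht.2 ht₀T.2⟩
    have hCt1 : 1 ≤ C t := hC1 t htT
    have hCt0 : 0 < C t := lt_of_lt_of_le one_pos hCt1
    have hI_eq : f t = ∫ τ in (0:ℝ)..t, u τ := hint_eq t htT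
    set I : ℝ := ∫ τ in (0:ℝ)..t, u τ with hI
    have hI0 : 0 ≤ I := by
      rw [← hI_eq]; exact hf_nonneg t ht.1
    have harg : 1 ≤ C t * Real.exp I :=
      one_le_mul_of_one_le_of_one_le hCt1 (Real.one_le_exp hI0)
    have hlog : Real.log (C t * Real.exp I) = Real.log (C t) + I := by
      rw [Real.log_mul (ne_of_gt hCt0) (Real.exp_ne_zero I), Real.log_exp]
    have hln : lnStar (C t * Real.exp I) ≤ 1 + Real.log (C t) + I := by
      calc lnStar (C t * Real.exp I) ≤ 1 + Real.log (C t * Real.exp I) :=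
            lnStar_le_one_add_log harg
        _ = 1 + Real.log (C t) + I := by rw [hlog]; ring
    have hmain : u t ≤ C t * (2 + Real.log (C t)) + C t * I := by
      have h1 := hineq t htT
      have h2 : C t * lnStar (C t * Real.exp I) ≤ C t * (1 + Real.log (C t) + I) :=
        mul_le_mul_of_nonneg_left hln hCt0.le
      calc u t ≤ C t + C t * lnStar (C t * Real.exp I) := h1
        _ ≤ C t + C t * (1 + Real.log (C t) + I) := by linarith
        _ = C t * (2 + Real.log (C t)) + C t * I := by ring
    -- monotonicity: C t ≤ C t₀ etc.
    have hCle : C t ≤ C t₀ := hCmono htT ht₀T ht.2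
    have hfirst : C t * (2 + Real.log (C t)) ≤ A := by
      rw [hA]
      apply mul_le_mul hCle _ _ hb0.le
      · have := Real.log_le_log hCt0 hCle
        linarith
      · have := Real.log_nonneg hCt1
        linarith
    have hsecond : C t * I ≤ b * I := mul_le_mul_of_nonneg_right hCle hI0
    have : u t ≤ A + b * I := by linarith
    rw [hv_eq t htT, hI_eq]
    exact this
  -- Gronwall
  have hderiv : ∀ x ∈ Ico (0:ℝ) t₀, HasDerivWithinAt f (v x) (Ici x) x := by
    intro x _
    exact (intervalIntegral.integral_hasDerivAt_right (hint 0 x)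
      (hv.stronglyMeasurableAtFilter _ _) hv.continuousAt).hasDerivWithinAt
  have hbound : ∀ x ∈ Ico (0:ℝ) t₀, ‖v x‖ ≤ b * ‖f x‖ + A := by
    intro x hx
    rw [Real.norm_of_nonneg (hv0 x), Real.norm_of_nonneg (hf_nonneg x hx.1)]
    have := key x ⟨hx.1, hx.2.le⟩
    linarith
  have ha0 : ‖f 0‖ ≤ 0 := by
    simp [hf_def, intervalIntegral.integral_same]
  have hgron := norm_le_gronwallBound_of_norm_deriv_right_le
    hf_cont.continuousOn hderiv ha0 hbound t₀ ⟨ht₀.1, le_refl t₀⟩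
  rw [Real.norm_of_nonneg (hf_nonneg t₀ ht₀.1), sub_zero,
    gronwallBound_of_K_ne_0 (ne_of_gt hb0)] at hgron
  have hfinal : v t₀ ≤ A + b * f t₀ := key t₀ ⟨ht₀.1, le_refl t₀⟩
  have : A + b * f t₀ ≤ A * Real.exp (b * t₀) := by
    have h1 : b * f t₀ ≤ b * (0 * Real.exp (b * t₀) + A / b * (Real.exp (b * t₀) - 1)) :=
      mul_le_mul_of_nonneg_left hgron hb0.le
    have h2 : b * (0 * Real.exp (b * t₀) + A / b * (Real.exp (b * t₀) - 1))
        = A * (Real.exp (b * t₀) - 1) := by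
      field_simp
      ring
    nlinarith [Real.exp_pos (b * t₀)]
  rw [← hv_eq t₀ ht₀T]
  calc v t₀ ≤ A + b * f t₀ := hfinal
    _ ≤ A * Real.exp (b * t₀) := this
    _ = C t₀ * (2 + Real.log (C t₀)) * Real.exp (C t₀ * t₀) := by rw [hA, hb]

end
end
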